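/- Let A ∈ ℝ^{n×n} be Metzler and let E_c, C_c, F_c, J, E_d, C_d, F_d be constant entrywise nonnegative matrices of compatible dimensions. Suppose there exist a vector λ ∈ ℝ^n with λ > 0 and a scalar γ > 0 such that Aλ + E_c𝟙 < 0, C_cλ + F_c𝟙 − γ𝟙 < 0, (J − I)λ + E_d𝟙 < 0, and C_dλ + F_d𝟙 − γ𝟙 < 0. Then for every impulse time sequence, the linear impulsive system with constant matrices ẋ = Ax + E_c w_c on flow intervals, jumps x(t_k⁺) = J x(t_k) + E_d w_d(k), and outputs z_c(t) = C_c x(t) + F_c w_c(t), z_d(k) = C_d x(t_k) + F_d w_d(k) satisfies: (i) there exist M > 0, α > 0 and ρ ∈ (0,1) such that every trajectory with w_c ≡ 0, w_d ≡ 0 satisfies ‖x(t)‖_∞ ≤ M ρ^{κ(t,t_0)} e^{−α(t−t_0)} ‖x(t_0)‖_∞ for all t ≥ t_0; and (ii) every trajectory with x(t_0) = 0 and inputs satisfying 0 ≤ w_c(t) ≤ 𝟙 and 0 ≤ w_d(k) ≤ 𝟙 satisfies z_c(t) ≤ γ𝟙 for all t ≥ t_0 and z_d(k) ≤ γ𝟙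 for all k ≥ 1. -/

import Mathlib

open Matrix Filter Set Topology

/-- A square real matrix is Metzler if all its off-diagonal entries are nonnegative. -/
def Metzler {n : ℕ} (A : Matrix (Fin n) (Fin n) ℝ) : Prop :=
  ∀ i j, i ≠ j → 0 ≤ A i j

/-- An impulse time sequence: `t 0` is the initial time `t₀`, the `t k` for `k ≥ 1` are the
impulse times; the sequence is strictly increasing and tends to infinity. -/
structure ImpulseSeq where
  t : ℕ → ℝ
  t0_nonneg : 0 ≤ t 0
  mono : StrictMono t
  tendsto_atTop : Filter.Tendsto t Filter.atTop Filter.atTop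

/-- `κ(t,s)`: the number of impulse instants `t_k`, `k ≥ 1`, with `s ≤ t_k < t`. -/
noncomputable def ImpulseSeq.kappa (σ : ImpulseSeq) (s u : ℝ) : ℕ :=
  Set.ncard {k : ℕ | 1 ≤ k ∧ s ≤ σ.t k ∧ σ.t k < u}

/-- A trajectory of the timer-dependent linear impulsive system: on each flow interval the
dynamics depend on the timer, i.e. the time elapsed since the last impulse. -/
def IsTimerTrajectory {n pc pd : ℕ} (σ : ImpulseSeq)
    (A : ℝ → Matrix (Fin n) (Fin n) ℝ) (Ec : ℝ → Matrix (Fin n) (Fin pc) ℝ)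
    (J : Matrix (Fin n) (Fin n) ℝ) (Ed : Matrix (Fin n) (Fin pd) ℝ)
    (wc : ℝ → Fin pc → ℝ) (wd : ℕ → Fin pd → ℝ)
    (x : ℝ → Fin n → ℝ) : Prop :=
  (∀ k, ContinuousOn x (Set.Ioc (σ.t k) (σ.t (k + 1)))) ∧
  (∀ k, ∀ s ∈ Set.Ioo (σ.t k) (σ.t (k + 1)),
    HasDerivAt x (A (s - σ.t k) *ᵥ x s + Ec (s - σ.t k) *ᵥ wc s) s) ∧
  ContinuousWithinAt x (Set.Ici (σ.t 0)) (σ.t 0) ∧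
  (∀ k, 1 ≤ k →
    Filter.Tendsto x (nhdsWithin (σ.t k) (Set.Ioi (σ.t k)))
      (nhds (J *ᵥ x (σ.t k) + Ed *ᵥ wd k)))

lemma mv_apply {m n : ℕ} (M : Matrix (Fin m) (Fin n) ℝ) (u : Fin n → ℝ) (i : Fin m) :
    (M *ᵥ u) i = ∑ j, M i j * u j := rfl

lemma mv_mono {m n : ℕ} {M : Matrix (Fin m) (Fin n) ℝ} (hM : ∀ i j, 0 ≤ M i j)
    {u w : Fin n → ℝ} (h : ∀ j, u j ≤ w j) : ∀ i, (M *ᵥ u) i ≤ (M *ᵥ w) i := by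
  intro i
  rw [mv_apply, mv_apply]
  exact Finset.sum_le_sum fun j _ => mul_le_mul_of_nonneg_left (h j) (hM i j)

lemma mv_nonneg {m n : ℕ} {M : Matrix (Fin m) (Fin n) ℝ} (hM : ∀ i j, 0 ≤ M i j)
    {u : Fin n → ℝ} (h : ∀ j, 0 ≤ u j) : ∀ i, 0 ≤ (M *ᵥ u) i := by
  intro i
  rw [mv_apply]
  exact Finset.sum_nonneg fun j _ => mul_nonneg (hM i j) (h j)

lemma metzler_drift {n : ℕ} {A : Matrix (Fin n) (Fin n) ℝ} (hAM : Metzler A)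
    {x lam : Fin n → ℝ} {c : ℝ} (h : ∀ j, x j ≤ c * lam j) {i : Fin n}
    (hi : x i = c * lam i) : (A *ᵥ x) i ≤ c * (A *ᵥ lam) i := by
  rw [mv_apply, mv_apply, Finset.mul_sum]
  refine Finset.sum_le_sum fun j _ => ?_
  rcases eq_or_ne j i with rfl | hne
  · rw [hi]; ring_nf; exact le_refl _
  · calc A i j * x j ≤ A i j * (c * lam j) :=
          mul_le_mul_of_nonneg_left (h j) (hAM i j hne.symm)
      _ = c * (A i j * lam j) := by ring

lemma kappa_zero (σ : ImpulseSeq) : σ.kappa (σ.t 0) (σ.t 0) = 0 := by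
  rw [ImpulseSeq.kappa]
  convert Set.ncard_empty ℕ
  ext k
  simp only [Set.mem_setOf_eq, Set.mem_empty_iff_false, iff_false]
  rintro ⟨-, h1, h2⟩
  exact absurd h1 (not_le.2 h2)

lemma kappa_eq (σ : ImpulseSeq) (m : ℕ) (s : ℝ)
    (hs : s ∈ Set.Ioc (σ.t m) (σ.t (m+1))) : σ.kappa (σ.t 0) s = m := by
  rw [ImpulseSeq.kappa]
  have : {k : ℕ | 1 ≤ k ∧ σ.t 0 ≤ σ.t k ∧ σ.t k < s} = ↑(Finset.Icc 1 m) := by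
    ext k
    simp only [Set.mem_setOf_eq, Finset.coe_Icc, Set.mem_Icc]
    constructor
    · rintro ⟨h1, -, h2⟩
      refine ⟨h1, ?_⟩
      have : σ.t k < σ.t (m+1) := h2.trans_le hs.2
      have := (σ.mono.lt_iff_lt).1 this
      omega
    · rintro ⟨h1, h2⟩
      exact ⟨h1, σ.mono.monotone (Nat.zero_le k),
        lt_of_le_of_lt (σ.mono.monotone h2) hs.1⟩
  rw [this, Set.ncard_coe_finset, Nat.card_Icc]
  omega

lemma exists_interval (σ : ImpulseSeq) (s : ℝ) (h : σ.t 0 < s) :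
    ∃ m, s ∈ Set.Ioc (σ.t m) (σ.t (m+1)) := by
  classical
  obtain ⟨N, hN⟩ := (σ.tendsto_atTop.eventually_ge_atTop s).exists
  set P : ℕ → Prop := fun k => σ.t k < s with hP
  set m := Nat.findGreatest P N with hm
  have hP0 : P 0 := h
  have hspec : P m := Nat.findGreatest_spec (Nat.zero_le N) hP0
  have hmle : m ≤ N := Nat.findGreatest_le N
  refine ⟨m, hspec, ?_⟩
  by_cases hc : m + 1 ≤ N
  · have := Nat.findGreatest_is_greatest (Nat.lt_succ_self m) hc
    exact le_of_not_gt this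
  · have hmN : m = N := by omega
    have : σ.t N ≤ σ.t (m+1) := σ.mono.monotone (by omega)
    exact hN.trans this

/-- Core componentwise invariance lemma via a max-function comparison. -/
lemma box_invariant {n : ℕ} {lam : Fin n → ℝ}
    {x v : ℝ → Fin n → ℝ} {a d : ℝ}
    (hx : ContinuousOn x (Set.Icc a d))
    (hx' : ∀ s ∈ Set.Ico a d, HasDerivAt x (v s) s)
    {B B' : ℝ → ℝ}
    (hB : ContinuousOn B (Set.Icc a d))
    (hB' : ∀ s ∈ Set.Ico a d, HasDerivAt B (B' s) s)
    (hstrict : ∀ s ∈ Set.Ico a d, (∀ j, x s j ≤ B s * lam j) →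
        ∀ i, x s i = B s * lam i → v s i < B' s * lam i)
    (h0 : ∀ i, x a i ≤ B a * lam i) :
    ∀ s ∈ Set.Icc a d, ∀ i, x s i ≤ B s * lam i := by
  rcases isEmpty_or_nonempty (Fin n) with hE | hNE
  · intro s hs i; exact (IsEmpty.false i).elim
  classical
  set g : Fin n → ℝ → ℝ := fun i z => x z i - B z * lam i with hg
  set f : ℝ → ℝ := fun z => Finset.univ.sup' Finset.univ_nonempty (fun i => g i z) with hf
  have hgc : ∀ i, ContinuousOn (g i) (Set.Icc a d) := by
    intro i
    exact ((continuous_apply i).comp_continuousOn hx).sub (hB.mul continuousOn_const)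
  have hfc : ContinuousOn f (Set.Icc a d) :=
    ContinuousOn.finset_sup'_apply Finset.univ_nonempty (fun i _ => hgc i)
  set gd : ℝ → Fin n → ℝ := fun s i => v s i - B' s * lam i with hgd
  have hgd' : ∀ s ∈ Set.Ico a d, ∀ i, HasDerivAt (g i) (gd s i) s := by
    intro s hs i
    exact ((hasDerivAt_pi.1 (hx' s hs) i).sub ((hB' s hs).mul_const (lam i)))
  set Act : ℝ → Set (Fin n) := fun s => {i | g i s = f s} with hAct
  have hActNe : ∀ s, (Act s).Nonempty := by
    intro s
    obtain ⟨i, -, hi⟩ := Finset.exists_mem_eq_sup' (Finset.univ_nonempty (α := Fin n))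
      (fun i => g i s)
    exact ⟨i, hi.symm⟩
  set f' : ℝ → ℝ := fun s => sSup ((gd s) '' (Act s)) with hf'def
  have hfin : ∀ s, ((gd s) '' (Act s)).Finite := fun s => (Set.toFinite _).image _
  have hImNe : ∀ s, ((gd s) '' (Act s)).Nonempty := fun s => (hActNe s).image _
  have hmem : ∀ s, f' s ∈ (gd s) '' (Act s) := fun s =>
    (hImNe s).csSup_mem (hfin s)
  have hle_f' : ∀ s, ∀ i ∈ Act s, gd s i ≤ f' s := by
    intro s i hi
    exact le_csSup (hfin s).bddAbove ⟨i, hi, rfl⟩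
  have hg_le_f : ∀ i z, g i z ≤ f z := by
    intro i z
    exact Finset.le_sup' (fun j => g j z) (Finset.mem_univ i)
  -- liminf slope condition
  have key : ∀ s ∈ Set.Ico a d, ∀ r, f' s < r → ∃ᶠ z in 𝓝[>] s, slope f s z < r := by
    intro s hs r hr
    obtain ⟨i0, hi0⟩ := hActNe s
    have hT : ∀ j, Filter.Tendsto (g j) (𝓝[>] s) (𝓝 (g j s)) := by
      intro j
      have h1 : Filter.Tendsto (g j) (𝓝[Set.Icc a d] s) (𝓝 (g j s)) :=
        (hgc j s ⟨hs.1, hs.2.le⟩).tendsto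
      have h2 : 𝓝[>] s ≤ 𝓝[Set.Icc a d] s := by
        rw [← nhdsWithin_Ioc_eq_nhdsGT hs.2]
        exact nhdsWithin_mono s (fun z hz => ⟨hs.1.trans hz.1.le, hz.2⟩)
      exact h1.mono_left h2
    have hev : ∀ j : Fin n, ∀ᶠ z in 𝓝[>] s,
        (j ∈ Act s → slope (g j) s z < r) ∧
        (j ∉ Act s → g j z < (f s + g j s)/2 ∧ (f s + g j s)/2 < g i0 z) := by
      intro j
      by_cases hj : j ∈ Act s
      · have hd : Filter.Tendsto (slope (g j) s) (𝓝[≠] s) (𝓝 (gd s j)) :=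
          hasDerivAt_iff_tendsto_slope.1 (hgd' s hs j)
        have hd' : Filter.Tendsto (slope (g j) s) (𝓝[>] s) (𝓝 (gd s j)) :=
          hd.mono_left (nhdsWithin_mono s (fun z hz => ne_of_gt hz))
        have : ∀ᶠ z in 𝓝[>] s, slope (g j) s z < r :=
          hd'.eventually (gt_mem_nhds (lt_of_le_of_lt (hle_f' s j hj) hr))
        filter_upwards [this] with z hz
        exact ⟨fun _ => hz, fun hcon => absurd hj hcon⟩
      · have hlt : g j s < f s := lt_of_le_of_ne (hg_le_f j s) hj
        have hh1 : g j s < (f s + g j s)/2 := by clear_value f' Act gd f g; linarith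
        have h1 : ∀ᶠ z in 𝓝[>] s, g j z < (f s + g j s)/2 :=
          (hT j).eventually (gt_mem_nhds hh1)
        have hi0' : g i0 s = f s := hi0
        have hh2 : (f s + g j s)/2 < g i0 s := by rw [hi0']; clear_value f' Act gd f g; linarith
        have h2 : ∀ᶠ z in 𝓝[>] s, (f s + g j s)/2 < g i0 z :=
          (hT i0).eventually (lt_mem_nhds hh2)
        filter_upwards [h1, h2] with z hz1 hz2
        exact ⟨fun hcon => absurd hcon hj, fun _ => ⟨hz1, hz2⟩⟩
    have hall : ∀ᶠ z in 𝓝[>] s, ∀ j : Fin n,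
        (j ∈ Act s → slope (g j) s z < r) ∧
        (j ∉ Act s → g j z < (f s + g j s)/2 ∧ (f s + g j s)/2 < g i0 z) :=
      eventually_all.2 hev
    refine (hall.mono ?_).frequently
    intro z hz
    obtain ⟨j, -, hj⟩ := Finset.exists_mem_eq_sup' (Finset.univ_nonempty (α := Fin n))
      (fun i => g i z)
    -- f z = g j z
    have hfz : f z = g j z := hj
    by_cases hjA : j ∈ Act s
    · have hfs : f s = g j s := (hjA).symm
      have heq : slope f s z = slope (g j) s z := by
        rw [slope_def_field, slope_def_field, hfs, hfz]
      rw [heq]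
      exact ((hz j).1 hjA)
    · exfalso
      have h3 := (hz j).2 hjA
      have h4 : g i0 z ≤ f z := hg_le_f i0 z
      rw [hfz] at h4
      have h31 := h3.1
      have h32 := h3.2
      clear_value f' Act gd f g; linarith
  -- boundary strictness
  have bound : ∀ s ∈ Set.Ico a d, f s = (fun _ => (0:ℝ)) s → f' s < (fun _ => (0:ℝ)) s := by
    intro s hs hfs
    simp only at hfs
    obtain ⟨i, hiA, hi⟩ := hmem s
    have hall : ∀ j, x s j ≤ B s * lam j := by
      intro j
      have := (hg_le_f j s).trans_eq hfs
      simpa [hg] using this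
    have heq : x s i = B s * lam i := by
      have : g i s = 0 := hiA.trans hfs
      simp only [hg] at this
      clear_value f' Act gd f g
      linarith
    have hlt2 := hstrict s hs hall i heq
    rw [← hi]
    show v s i - B' s * lam i < 0
    linarith
  have main : ∀ s ∈ Set.Icc a d, f s ≤ 0 := by
    intro s hs
    have ha0 : f a ≤ (0:ℝ) :=
      Finset.sup'_le _ _ (fun i _ => sub_nonpos.2 (h0 i))
    have := image_le_of_liminf_slope_right_lt_deriv_boundary' hfc key
      (B := fun _ => (0:ℝ)) (B' := fun _ => (0:ℝ)) ha0
      continuousOn_const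
      (fun z _ => (hasDerivAt_const z (0:ℝ)).hasDerivWithinAt) bound hs
    simpa using this
  intro s hs i
  have := (hg_le_f i s).trans (main s hs)
  simpa [hg] using sub_nonpos.1 this

/-- From a strict bound on the right limit at `a`, propagate the bound over `(a, d]`. -/
lemma interval_bound {n : ℕ} {lam : Fin n → ℝ}
    {x v : ℝ → Fin n → ℝ} {a d : ℝ} (had : a < d)
    (hx : ContinuousOn x (Set.Ioc a d))
    (hx' : ∀ s ∈ Set.Ioo a d, HasDerivAt x (v s) s)
    {B B' : ℝ → ℝ}
    (hB : ContinuousOn B (Set.Icc a d))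
    (hB' : ∀ s ∈ Set.Ioo a d, HasDerivAt B (B' s) s)
    (hstrict : ∀ s ∈ Set.Ioo a d, (∀ j, x s j ≤ B s * lam j) →
        ∀ i, x s i = B s * lam i → v s i < B' s * lam i)
    {ξ : Fin n → ℝ} (hlim : Filter.Tendsto x (𝓝[>] a) (𝓝 ξ))
    (hξ : ∀ i, ξ i < B a * lam i) :
    ∀ s ∈ Set.Ioc a d, ∀ i, x s i ≤ B s * lam i := by
  intro s hs
  have hBt : Filter.Tendsto B (𝓝[>] a) (𝓝 (B a)) := by
    have h1 := (hB a ⟨le_refl a, had.le⟩).tendsto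
    have h2 : 𝓝[>] a ≤ 𝓝[Set.Icc a d] a := by
      rw [← nhdsWithin_Ioc_eq_nhdsGT had]
      exact nhdsWithin_mono a (fun z hz => ⟨hz.1.le, hz.2⟩)
    exact h1.mono_left h2
  have hev : ∀ᶠ z in 𝓝[>] a, ∀ i, x z i ≤ B z * lam i := by
    rw [eventually_all]
    intro i
    have hxi : Filter.Tendsto (fun z => x z i) (𝓝[>] a) (𝓝 (ξ i)) :=
      ((continuous_apply i).continuousAt.tendsto.comp hlim)
    have hsub : Filter.Tendsto (fun z => B z * lam i - x z i) (𝓝[>] a)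
        (𝓝 (B a * lam i - ξ i)) := (hBt.mul_const (lam i)).sub hxi
    have hpos : (0:ℝ) < B a * lam i - ξ i := sub_pos.2 (hξ i)
    filter_upwards [hsub.eventually (lt_mem_nhds hpos)] with z hz
    linarith
  have hmemev : ∀ᶠ z in 𝓝[>] a, z ∈ Set.Ioo a s :=
    Ioo_mem_nhdsGT_of_mem (Set.left_mem_Ico.2 hs.1)
  obtain ⟨a', ha'mem, ha'le⟩ := (hmemev.and hev).exists
  have hsub1 : Set.Icc a' d ⊆ Set.Ioc a d := fun z hz => ⟨ha'mem.1.trans_le hz.1, hz.2⟩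
  have hsub2 : Set.Ico a' d ⊆ Set.Ioo a d := fun z hz => ⟨ha'mem.1.trans_le hz.1, hz.2⟩
  exact box_invariant (hx.mono hsub1) (fun u hu => hx' u (hsub2 hu))
    (hB.mono (Set.Icc_subset_Icc_left ha'mem.1.le))
    (fun u hu => hB' u (hsub2 hu))
    (fun u hu => hstrict u (hsub2 hu)) ha'le s ⟨ha'mem.2.le, hs.2⟩

/-- Propagate bounds across all flow intervals by induction. -/
lemma global_bound {n : ℕ} (σ : ImpulseSeq) {lam : Fin n → ℝ}
    {x v : ℝ → Fin n → ℝ} {ξ : ℕ → Fin n → ℝ}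
    (hxc : ∀ k, ContinuousOn x (Set.Ioc (σ.t k) (σ.t (k+1))))
    (hx' : ∀ k, ∀ s ∈ Set.Ioo (σ.t k) (σ.t (k+1)), HasDerivAt x (v s) s)
    (hx0 : ContinuousWithinAt x (Set.Ici (σ.t 0)) (σ.t 0))
    (hxj : ∀ k, 1 ≤ k →
      Filter.Tendsto x (nhdsWithin (σ.t k) (Set.Ioi (σ.t k))) (nhds (ξ k)))
    {B B' : ℕ → ℝ → ℝ}
    (hB : ∀ k, ContinuousOn (B k) (Set.Icc (σ.t k) (σ.t (k+1))))
    (hB' : ∀ k, ∀ s ∈ Set.Ioo (σ.t k) (σ.t (k+1)), HasDerivAt (B k) (B' k s) s)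
    (hstrict : ∀ k, ∀ s ∈ Set.Ioo (σ.t k) (σ.t (k+1)), (∀ j, x s j ≤ B k s * lam j) →
        ∀ i, x s i = B k s * lam i → v s i < B' k s * lam i)
    (hinit : ∀ i, x (σ.t 0) i < B 0 (σ.t 0) * lam i)
    (hjumpc : ∀ k, (∀ i, x (σ.t (k+1)) i ≤ B k (σ.t (k+1)) * lam i) →
        ∀ i, ξ (k+1) i < B (k+1) (σ.t (k+1)) * lam i) :
    ∀ k, ∀ s ∈ Set.Ioc (σ.t k) (σ.t (k+1)), ∀ i, x s i ≤ B k s * lam i := by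
  intro k
  induction k with
  | zero =>
    have hlim : Filter.Tendsto x (𝓝[>] (σ.t 0)) (𝓝 (x (σ.t 0))) :=
      hx0.tendsto.mono_left (nhdsWithin_mono _ Set.Ioi_subset_Ici_self)
    exact interval_bound (σ.mono (Nat.lt_succ_self 0)) (hxc 0) (hx' 0) (hB 0) (hB' 0)
      (hstrict 0) hlim (fun i => hinit i)
  | succ m ih =>
    have hend : ∀ i, x (σ.t (m+1)) i ≤ B m (σ.t (m+1)) * lam i :=
      ih (σ.t (m+1)) ⟨σ.mono (Nat.lt_succ_self m), le_refl _⟩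
    exact interval_bound (σ.mono (Nat.lt_succ_self (m+1))) (hxc (m+1)) (hx' (m+1))
      (hB (m+1)) (hB' (m+1)) (hstrict (m+1)) (hxj (m+1) (Nat.le_add_left 1 m))
      (hjumpc m hend)

lemma mv_scale {m n : ℕ} (M : Matrix (Fin m) (Fin n) ℝ) (c : ℝ) (u : Fin n → ℝ)
    (i : Fin m) : (M *ᵥ fun j => c * u j) i = c * (M *ᵥ u) i := by
  rw [mv_apply, mv_apply, Finset.mul_sum]
  exact Finset.sum_congr rfl fun j _ => by ring

/-- Part (ii) invariance: the box `x ≤ λ` is forward invariant. -/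
lemma part2_bound {n pc pd : ℕ}
    (A : Matrix (Fin n) (Fin n) ℝ) (Ec : Matrix (Fin n) (Fin pc) ℝ)
    (J : Matrix (Fin n) (Fin n) ℝ) (Ed : Matrix (Fin n) (Fin pd) ℝ)
    (hAM : Metzler A) (hEcp : ∀ i j, 0 ≤ Ec i j) (hJp : ∀ i j, 0 ≤ J i j)
    (hEdp : ∀ i j, 0 ≤ Ed i j)
    (lam : Fin n → ℝ) (hlam : ∀ i, 0 < lam i)
    (hflow : ∀ i, (A *ᵥ lam + Ec *ᵥ (fun _ => (1:ℝ))) i < 0)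
    (hjump : ∀ i, ((J - (1 : Matrix (Fin n) (Fin n) ℝ)) *ᵥ lam
        + Ed *ᵥ (fun _ => (1:ℝ))) i < 0)
    (σ : ImpulseSeq) (wc : ℝ → Fin pc → ℝ) (wd : ℕ → Fin pd → ℝ) (x : ℝ → Fin n → ℝ)
    (hwc : ∀ s i, 0 ≤ wc s i ∧ wc s i ≤ 1) (hwd : ∀ k i, 0 ≤ wd k i ∧ wd k i ≤ 1)
    (htraj : IsTimerTrajectory σ (fun _ => A) (fun _ => Ec) J Ed wc wd x)
    (hx0 : x (σ.t 0) = 0) :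
    ∀ s, σ.t 0 ≤ s → ∀ i, x s i ≤ lam i := by
  obtain ⟨hc, hd, h0, hj⟩ := htraj
  have key := global_bound σ (lam := lam)
    (v := fun s => A *ᵥ x s + Ec *ᵥ wc s)
    (ξ := fun k => J *ᵥ x (σ.t k) + Ed *ᵥ wd k)
    (B := fun _ _ => (1:ℝ)) (B' := fun _ _ => (0:ℝ))
    hc (fun k s hs => hd k s hs) h0 hj
    (fun k => continuousOn_const)
    (fun k s _ => hasDerivAt_const s 1)
    ?_ ?_ ?_
  · intro s hs i
    rcases eq_or_lt_of_le hs with heq | hlt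
    · rw [← heq, hx0]; exact (hlam i).le
    · obtain ⟨m, hm⟩ := exists_interval σ s hlt
      have h := key m s hm i
      simp only [one_mul] at h
      exact h
  · -- strict drift
    intro k s hs hle i heq
    have h1 : (A *ᵥ x s) i ≤ 1 * (A *ᵥ lam) i := metzler_drift hAM hle heq
    have h2 : (Ec *ᵥ wc s) i ≤ (Ec *ᵥ fun _ => (1:ℝ)) i :=
      mv_mono hEcp (fun j => (hwc s j).2) i
    have h3 := hflow i
    simp only [Pi.add_apply] at h3 ⊢
    have : (0:ℝ) * lam i = 0 := by ring
    rw [this]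
    linarith
  · -- initial condition
    intro i
    rw [hx0]
    simp only [Pi.zero_apply, one_mul]
    exact hlam i
  · -- jump condition
    intro k hend i
    have h1 : (J *ᵥ x (σ.t (k+1))) i ≤ (J *ᵥ lam) i :=
      mv_mono hJp (fun j => by simpa using hend j) i
    have h2 : (Ed *ᵥ wd (k+1)) i ≤ (Ed *ᵥ fun _ => (1:ℝ)) i :=
      mv_mono hEdp (fun j => (hwd (k+1) j).2) i
    have h3 := hjump i
    rw [Matrix.sub_mulVec, Matrix.one_mulVec] at h3
    simp only [Pi.add_apply, Pi.sub_apply] at h3 ⊢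
    linarith

/-- Part (i) componentwise decay estimate. -/
lemma part1_bound {n pc pd : ℕ}
    (A : Matrix (Fin n) (Fin n) ℝ) (Ec : Matrix (Fin n) (Fin pc) ℝ)
    (J : Matrix (Fin n) (Fin n) ℝ) (Ed : Matrix (Fin n) (Fin pd) ℝ)
    (hAM : Metzler A) (hJp : ∀ i j, 0 ≤ J i j)
    (lam : Fin n → ℝ) (hlam : ∀ i, 0 < lam i)
    (α ρ : ℝ) (hα : 0 < α) (hρ : 0 < ρ)
    (hA : ∀ i, (A *ᵥ lam) i < -α * lam i)
    (hJ : ∀ i, (J *ᵥ lam) i < ρ * lam i)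
    (σ : ImpulseSeq) (x : ℝ → Fin n → ℝ)
    (htraj : IsTimerTrajectory σ (fun _ => A) (fun _ => Ec) J Ed
      (fun _ => 0) (fun _ => (0 : Fin pd → ℝ)) x)
    (c : ℝ) (hc : 0 < c) (hinit : ∀ i, x (σ.t 0) i < c * lam i) :
    ∀ k, ∀ s ∈ Set.Ioc (σ.t k) (σ.t (k+1)), ∀ i,
      x s i ≤ c * ρ^k * Real.exp (-(α * (s - σ.t 0))) * lam i := by
  obtain ⟨hcx, hd, h0, hj⟩ := htraj
  have hvz : ∀ s : ℝ, (Ec *ᵥ (0 : Fin pc → ℝ)) = 0 := fun s => Matrix.mulVec_zero Ec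
  have hEdz : (Ed *ᵥ (0 : Fin pd → ℝ)) = 0 := Matrix.mulVec_zero Ed
  have key := global_bound σ (lam := lam)
    (v := fun s => A *ᵥ x s + Ec *ᵥ (0 : Fin pc → ℝ))
    (ξ := fun k => J *ᵥ x (σ.t k) + Ed *ᵥ (0 : Fin pd → ℝ))
    (B := fun k s => c * ρ^k * Real.exp (-(α * (s - σ.t 0))))
    (B' := fun k s => c * ρ^k * (Real.exp (-(α * (s - σ.t 0))) * (-α)))
    hcx (fun k s hs => hd k s hs) h0 (fun k hk => hj k hk)
    ?_ ?_ ?_ ?_ ?_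
  · exact key
  · -- continuity of B k
    intro k
    apply ContinuousOn.mul continuousOn_const
    exact (Real.continuous_exp.comp (by continuity)).continuousOn
  · -- derivative of B k
    intro k s _
    have h1 : HasDerivAt (fun u : ℝ => -(α * (u - σ.t 0))) (-α) s := by
      have h := (((hasDerivAt_id s).sub_const (σ.t 0)).const_mul α).neg
      simp only [mul_one] at h
      exact h
    have h2 := h1.exp
    simpa using h2.const_mul (c * ρ^k)
  · -- strict drift
    intro k s hs hle i heq
    set Bv := c * ρ^k * Real.exp (-(α * (s - σ.t 0))) with hBv
    have hBvp : 0 < Bv := by positivity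
    have h1 : (A *ᵥ x s) i ≤ Bv * (A *ᵥ lam) i := metzler_drift hAM hle heq
    have h2 : Bv * (A *ᵥ lam) i < Bv * (-α * lam i) :=
      mul_lt_mul_of_pos_left (hA i) hBvp
    have h3 : (Ec *ᵥ (0 : Fin pc → ℝ)) i = 0 := by rw [hvz s]; rfl
    simp only [Pi.add_apply, h3, add_zero]
    calc (A *ᵥ x s) i < Bv * (-α * lam i) := lt_of_le_of_lt h1 h2
      _ = c * ρ^k * (Real.exp (-(α * (s - σ.t 0))) * (-α)) * lam i := by
          rw [hBv]; ring
  · -- initial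
    intro i
    show x (σ.t 0) i < c * ρ^0 * Real.exp (-(α * (σ.t 0 - σ.t 0))) * lam i
    have he : c * ρ^0 * Real.exp (-(α * (σ.t 0 - σ.t 0))) = c := by
      simp [sub_self]
    rw [he]
    exact hinit i
  · -- jump
    intro k hend i
    set E := Real.exp (-(α * (σ.t (k+1) - σ.t 0))) with hE
    set Bk := c * ρ^k * E with hBk
    have hBkp : 0 < Bk := by positivity
    have h1 : (J *ᵥ x (σ.t (k+1))) i ≤ (J *ᵥ fun j => Bk * lam j) i :=
      mv_mono hJp hend i
    have h2 : (J *ᵥ fun j => Bk * lam j) i = Bk * (J *ᵥ lam) i := mv_scale J Bk lam i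
    have h3 : Bk * (J *ᵥ lam) i < Bk * (ρ * lam i) :=
      mul_lt_mul_of_pos_left (hJ i) hBkp
    have h4 : (Ed *ᵥ (0 : Fin pd → ℝ)) i = 0 := by rw [hEdz]; rfl
    simp only [Pi.add_apply, h4, add_zero]
    calc (J *ᵥ x (σ.t (k+1))) i < Bk * (ρ * lam i) := by rw [← h2] at h3; exact lt_of_le_of_lt h1 h3
      _ = c * ρ^(k+1) * E * lam i := by rw [hBk, pow_succ]; ring

/-- Arbitrary dwell-time: the linear-programming conditions guarantee, for every impulse
time sequence, uniform exponential stability and the hybrid `L∞×ℓ∞` performance level `γ`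
for the impulsive system with constant matrices. -/
theorem arbitrary_dwell_time_Linf_suff {n pc pd qc qd : ℕ}
    (A : Matrix (Fin n) (Fin n) ℝ) (Ec : Matrix (Fin n) (Fin pc) ℝ)
    (Cc : Matrix (Fin qc) (Fin n) ℝ) (Fc : Matrix (Fin qc) (Fin pc) ℝ)
    (J : Matrix (Fin n) (Fin n) ℝ) (Ed : Matrix (Fin n) (Fin pd) ℝ)
    (Cd : Matrix (Fin qd) (Fin n) ℝ) (Fd : Matrix (Fin qd) (Fin pd) ℝ)
    (hAM : Metzler A)
    (hEcp : ∀ i j, 0 ≤ Ec i j) (hCcp : ∀ i j, 0 ≤ Cc i j) (hFcp : ∀ i j, 0 ≤ Fc i j)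
    (hJp : ∀ i j, 0 ≤ J i j) (hEdp : ∀ i j, 0 ≤ Ed i j)
    (hCdp : ∀ i j, 0 ≤ Cd i j) (hFdp : ∀ i j, 0 ≤ Fd i j)
    (lam : Fin n → ℝ) (hlam : ∀ i, 0 < lam i) (γ : ℝ) (hγ : 0 < γ)
    (hflow : ∀ i, (A *ᵥ lam + Ec *ᵥ (fun _ => (1:ℝ))) i < 0)
    (hperfc : ∀ i, (Cc *ᵥ lam + Fc *ᵥ (fun _ => (1:ℝ))) i - γ < 0)
    (hjump : ∀ i, ((J - (1 : Matrix (Fin n) (Fin n) ℝ)) *ᵥ lam + Ed *ᵥ (fun _ => (1:ℝ))) i < 0)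
    (hperfd : ∀ i, (Cd *ᵥ lam + Fd *ᵥ (fun _ => (1:ℝ))) i - γ < 0) :
    ∀ σ : ImpulseSeq,
      (∃ (M α ρ : ℝ), 0 < M ∧ 0 < α ∧ ρ ∈ Set.Ioo (0 : ℝ) 1 ∧
        ∀ x : ℝ → Fin n → ℝ,
          IsTimerTrajectory σ (fun _ => A) (fun _ => Ec) J Ed
            (fun _ => 0) (fun _ => (0 : Fin pd → ℝ)) x →
          ∀ s : ℝ, σ.t 0 ≤ s →
            ‖x s‖ ≤ M * (ρ ^ (σ.kappa (σ.t 0) s) *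
              (Real.exp (-(α * (s - σ.t 0))) * ‖x (σ.t 0)‖))) ∧
      (∀ (wc : ℝ → Fin pc → ℝ) (wd : ℕ → Fin pd → ℝ) (x : ℝ → Fin n → ℝ),
        Continuous wc →
        (∀ s i, 0 ≤ wc s i ∧ wc s i ≤ 1) →
        (∀ k i, 0 ≤ wd k i ∧ wd k i ≤ 1) →
        IsTimerTrajectory σ (fun _ => A) (fun _ => Ec) J Ed wc wd x →
        x (σ.t 0) = 0 →
        (∀ s : ℝ, σ.t 0 ≤ s → ∀ i, (Cc *ᵥ x s + Fc *ᵥ wc s) i ≤ γ) ∧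
        (∀ k : ℕ, 1 ≤ k → ∀ i, (Cd *ᵥ x (σ.t k) + Fd *ᵥ wd k) i ≤ γ)) := by
  intro σ
  constructor
  · -- Part (i): exponential stability
    rcases isEmpty_or_nonempty (Fin n) with hE | hNE
    · refine ⟨1, 1, 1/2, one_pos, one_pos, ⟨by norm_num, by norm_num⟩, ?_⟩
      intro x htraj s hs
      have hxs : x s = 0 := funext fun i => (hE.false i).elim
      have hxt : x (σ.t 0) = 0 := funext fun i => (hE.false i).elim
      rw [hxs, hxt]
      simp
    · have hEc1 : ∀ i, 0 ≤ (Ec *ᵥ fun _ => (1:ℝ)) i := mv_nonneg hEcp (fun _ => zero_le_one)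
      have hEd1 : ∀ i, 0 ≤ (Ed *ᵥ fun _ => (1:ℝ)) i := mv_nonneg hEdp (fun _ => zero_le_one)
      have hAneg : ∀ i, (A *ᵥ lam) i < 0 := by
        intro i; have h := hflow i; simp only [Pi.add_apply] at h; linarith [hEc1 i]
      have hJlt : ∀ i, (J *ᵥ lam) i < lam i := by
        intro i; have h := hjump i
        rw [Matrix.sub_mulVec, Matrix.one_mulVec] at h
        simp only [Pi.add_apply, Pi.sub_apply] at h
        linarith [hEd1 i]
      have hJ0 : ∀ i, 0 ≤ (J *ᵥ lam) i := mv_nonneg hJp (fun j => (hlam j).le)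
      set αs : ℝ := Finset.univ.inf' Finset.univ_nonempty (fun i => -(A *ᵥ lam) i / lam i)
        with hαs
      have hαsp : 0 < αs := by
        rw [hαs, Finset.lt_inf'_iff]
        intro i _
        exact div_pos (by linarith [hAneg i]) (hlam i)
      have hαs_le : ∀ i, αs ≤ -(A *ᵥ lam) i / lam i := fun i =>
        Finset.inf'_le _ (Finset.mem_univ i)
      set α := αs / 2 with hα
      have hαp : 0 < α := by rw [hα]; linarith
      have hAα : ∀ i, (A *ᵥ lam) i < -α * lam i := by
        intro i
        have h1 : α < -(A *ᵥ lam) i / lam i :=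
          lt_of_lt_of_le (by rw [hα]; linarith) (hαs_le i)
        have h2 : α * lam i < -(A *ᵥ lam) i := (lt_div_iff₀ (hlam i)).1 h1
        linarith
      set ρs : ℝ := Finset.univ.sup' Finset.univ_nonempty (fun i => (J *ᵥ lam) i / lam i)
        with hρs
      have i0 : Fin n := Classical.arbitrary _
      have hρs0 : 0 ≤ ρs := by
        have h1 : (0:ℝ) ≤ (J *ᵥ lam) i0 / lam i0 := div_nonneg (hJ0 i0) (hlam i0).le
        have h2 : (J *ᵥ lam) i0 / lam i0 ≤ ρs :=
          Finset.le_sup' (fun i => (J *ᵥ lam) i / lam i) (Finset.mem_univ i0)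
        exact le_trans h1 h2
      have hρs1 : ρs < 1 := by
        rw [hρs, Finset.sup'_lt_iff]
        intro i _
        rw [div_lt_one (hlam i)]
        exact hJlt i
      have hρs_ge : ∀ i, (J *ᵥ lam) i / lam i ≤ ρs := fun i =>
        Finset.le_sup' (fun i => (J *ᵥ lam) i / lam i) (Finset.mem_univ i)
      set ρ := (ρs + 1)/2 with hρdef
      have hρp : 0 < ρ := by rw [hρdef]; linarith
      have hρ1 : ρ < 1 := by rw [hρdef]; linarith
      have hJρ : ∀ i, (J *ᵥ lam) i < ρ * lam i := by
        intro i
        have h1 : (J *ᵥ lam) i ≤ ρs * lam i := (div_le_iff₀ (hlam i)).1 (hρs_ge i)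
        have h2 : ρs * lam i < ρ * lam i := by
          apply mul_lt_mul_of_pos_right _ (hlam i); rw [hρdef]; linarith
        linarith
      set lmin : ℝ := Finset.univ.inf' Finset.univ_nonempty lam with hlmin
      set lmax : ℝ := Finset.univ.sup' Finset.univ_nonempty lam with hlmax
      have hlminp : 0 < lmin := by
        rw [hlmin, Finset.lt_inf'_iff]; exact fun i _ => hlam i
      have hlmin_le : ∀ i, lmin ≤ lam i := fun i => Finset.inf'_le lam (Finset.mem_univ i)
      have hlmax_ge : ∀ i, lam i ≤ lmax := fun i => Finset.le_sup' lam (Finset.mem_univ i)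
      have hlmaxp : 0 < lmax :=
        lt_of_lt_of_le hlminp (le_trans (hlmin_le i0) (hlmax_ge i0))
      set M := lmax / lmin with hM
      have hMp : 0 < M := div_pos hlmaxp hlminp
      have hM1 : 1 ≤ M := (one_le_div hlminp).2
        (le_trans (hlmin_le i0) (hlmax_ge i0))
      refine ⟨M, α, ρ, hMp, hαp, ⟨hρp, hρ1⟩, ?_⟩
      intro x htraj s hs
      have htrajneg : IsTimerTrajectory σ (fun _ => A) (fun _ => Ec) J Ed
          (fun _ => 0) (fun _ => (0 : Fin pd → ℝ)) (fun u => -(x u)) := by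
        obtain ⟨hcx, hdx, h0x, hjx⟩ := htraj
        refine ⟨fun k => (hcx k).neg, fun k u hu => ?_, h0x.neg, fun k hk => ?_⟩
        · have h : HasDerivAt (fun u => -(x u)) (-(A *ᵥ x u + Ec *ᵥ (0 : Fin pc → ℝ))) u :=
            (hdx k u hu).neg
          convert h using 1
          simp [Matrix.mulVec_zero, Matrix.mulVec_neg]
        · have h := (hjx k hk).neg
          convert h using 2
          simp [Matrix.mulVec_zero, Matrix.mulVec_neg]
      set N := ‖x (σ.t 0)‖ with hN
      have hN0 : 0 ≤ N := norm_nonneg _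
      have Hq : ∀ ε > (0:ℝ), ‖x s‖ ≤ M * (ρ ^ (σ.kappa (σ.t 0) s) *
          (Real.exp (-(α * (s - σ.t 0))) * (N + ε))) := by
        intro ε hε
        set cc := (N + ε) / lmin with hcc
        have hNε : 0 < N + ε := by linarith
        have hccp : 0 < cc := div_pos hNε hlminp
        have hccl : ∀ i, N + ε ≤ cc * lam i := by
          intro i
          have h1 : cc * lmin = N + ε := div_mul_cancel₀ _ (ne_of_gt hlminp)
          have h2 : cc * lmin ≤ cc * lam i :=
            mul_le_mul_of_nonneg_left (hlmin_le i) hccp.le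
          linarith
        have habs0 : ∀ i, |x (σ.t 0) i| ≤ N := by
          intro i
          have h := norm_le_pi_norm (x (σ.t 0)) i
          simpa [Real.norm_eq_abs, hN] using h
        have hinit1 : ∀ i, x (σ.t 0) i < cc * lam i := by
          intro i
          have h1 := (abs_le.1 (habs0 i)).2
          have h2 := hccl i
          linarith
        have hinit2 : ∀ i, -(x (σ.t 0) i) < cc * lam i := by
          intro i
          have h1 := (abs_le.1 (habs0 i)).1
          have h2 := hccl i
          linarith
        rcases eq_or_lt_of_le hs with heq | hlt
        · rw [← heq, kappa_zero σ, sub_self, mul_zero, neg_zero, Real.exp_zero, pow_zero]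
          have : (1:ℝ) * (N + ε) ≤ M * (N + ε) :=
            mul_le_mul_of_nonneg_right hM1 hNε.le
          rw [← hN]
          nlinarith
        · obtain ⟨m, hm⟩ := exists_interval σ s hlt
          rw [kappa_eq σ m s hm]
          have hb1 := part1_bound A Ec J Ed hAM hJp lam hlam α ρ hαp hρp hAα hJρ σ x
            htraj cc hccp hinit1 m s hm
          have hb2 := part1_bound A Ec J Ed hAM hJp lam hlam α ρ hαp hρp hAα hJρ σ
            (fun u => -(x u)) htrajneg cc hccp hinit2 m s hm
          set E := Real.exp (-(α * (s - σ.t 0))) with hE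
          have hEp : 0 < E := Real.exp_pos _
          have hfac : 0 ≤ cc * ρ ^ m * E := by positivity
          have habs : ∀ i, |x s i| ≤ cc * ρ ^ m * E * lmax := by
            intro i
            have h1 : x s i ≤ cc * ρ ^ m * E * lam i := hb1 i
            have h2 : -(x s i) ≤ cc * ρ ^ m * E * lam i := hb2 i
            have h3 : |x s i| ≤ cc * ρ ^ m * E * lam i := abs_le.2 ⟨by linarith, h1⟩
            have h4 : cc * ρ ^ m * E * lam i ≤ cc * ρ ^ m * E * lmax :=
              mul_le_mul_of_nonneg_left (hlmax_ge i) hfac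
            linarith
          have hnorm : ‖x s‖ ≤ cc * ρ ^ m * E * lmax := by
            rw [pi_norm_le_iff_of_nonneg (by positivity)]
            intro i
            rw [Real.norm_eq_abs]
            exact habs i
          have heqr : cc * ρ ^ m * E * lmax = M * (ρ ^ m * (E * (N + ε))) := by
            rw [hcc, hM]
            field_simp
          rw [← heqr]
          exact hnorm
      set κv := σ.kappa (σ.t 0) s with hκv
      set Ev := Real.exp (-(α * (s - σ.t 0))) with hEv
      have hEvp : 0 < Ev := Real.exp_pos _
      set Kp := M * (ρ ^ κv * Ev) with hKp
      have hKpp : 0 < Kp := by positivity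
      have h2 : M * (ρ ^ κv * (Ev * N)) = Kp * N := by rw [hKp]; ring
      rw [h2]
      refine le_of_forall_pos_le_add (fun δ hδ => ?_)
      have hq := Hq (δ / Kp) (div_pos hδ hKpp)
      have h3 : M * (ρ ^ κv * (Ev * (N + δ / Kp))) = Kp * N + δ := by
        have h4 : Kp * (N + δ / Kp) = Kp * N + δ := by
          rw [mul_add, mul_div_cancel₀ _ hKpp.ne']
        calc M * (ρ ^ κv * (Ev * (N + δ / Kp))) = Kp * (N + δ / Kp) := by rw [hKp]; ring
          _ = Kp * N + δ := h4
      rw [h3] at hq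
      exact hq
  · -- Part (ii): performance
    intro wc wd x hwcont hwc hwd htraj hx00
    have hbox := part2_bound A Ec J Ed hAM hEcp hJp hEdp lam hlam hflow hjump σ wc wd x
      hwc hwd htraj hx00
    constructor
    · intro s hs i
      have h1 : ∀ j, x s j ≤ lam j := hbox s hs
      have h2 : (Cc *ᵥ x s) i ≤ (Cc *ᵥ lam) i := mv_mono hCcp h1 i
      have h3 : (Fc *ᵥ wc s) i ≤ (Fc *ᵥ fun _ => (1:ℝ)) i :=
        mv_mono hFcp (fun j => (hwc s j).2) i
      have h4 := hperfc i
      simp only [Pi.add_apply] at h4 ⊢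
      linarith
    · intro k hk i
      have htk : σ.t 0 ≤ σ.t k := σ.mono.monotone (Nat.zero_le k)
      have h1 : ∀ j, x (σ.t k) j ≤ lam j := hbox (σ.t k) htk
      have h2 : (Cd *ᵥ x (σ.t k)) i ≤ (Cd *ᵥ lam) i := mv_mono hCdp h1 i
      have h3 : (Fd *ᵥ wd k) i ≤ (Fd *ᵥ fun _ => (1:ℝ)) i :=
        mv_mono hFdp (fun j => (hwd k j).2) i
      have h4 := hperfd i
      simp only [Pi.add_apply] at h4 ⊢
      linarith
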